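/- Let (F_n)_{n≥0} be a nested sequence of finite families of closed dyadic cubes in [0,1]^d (each cube of F_{n+1} contained in exactly one cube of F_n), and suppose for each U ∈ F_{n-1} there is j(U) ≥ 2g(U) with: the cubes of F_n inside U number exactly (κ/2^{d+1})·2^{d(j(U)-g(U))}, are pairwise at distance at least 2^{-j(U)}, and have generation at most δ·(j(U)+1)+4, where κ ∈ (0,1) and δ > 1 are fixed. Let μ be the probability measure splitting mass equally among children at each step. If for each n the minimum j over U ∈ F_{n-1} is chosen sufficiently large, then for every U ∈ F_{n-1} and child V ∈ F_n, μ(V) ≤ |V|^{d/δ - 3dφ(|V|)}, where φ ∈ Φ is fixed. -/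

import Mathlib

open Metric Set Filter

noncomputable section

/-- The class `Φ` of admissible modulating functions. -/
structure MemPhi (φ : ℝ → ℝ) : Prop where
  cont : Continuous φ
  mono : MonotoneOn φ (Ici 0)
  nonneg : ∀ x ∈ Ici (0:ℝ), 0 ≤ φ x
  zero : φ 0 = 0
  anti : StrictAntiOn (fun x : ℝ => x ^ (-(φ x))) (Ioi 0)
  tendsto_top : Tendsto (fun x : ℝ => x ^ (-(φ x))) (nhdsWithin 0 (Ioi 0)) atTop
  incr : ∀ α β : ℝ, 0 < α → 0 < β →
    ∃ ε > 0, StrictMonoOn (fun x : ℝ => x ^ (α - β * φ x)) (Ioo 0 ε)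

-- monotonicity of n * φ(2^{-n})
lemma aux_mono {φ : ℝ → ℝ} (hφ : MemPhi φ) {m n : ℕ} (hmn : m ≤ n) :
    (m:ℝ) * φ (((2:ℝ)^m)⁻¹) ≤ (n:ℝ) * φ (((2:ℝ)^n)⁻¹) := by
  rcases eq_or_lt_of_le hmn with h | h
  · subst h; exact le_refl _
  · set x1 : ℝ := ((2:ℝ)^n)⁻¹ with hx1d
    set x2 : ℝ := ((2:ℝ)^m)⁻¹ with hx2d
    have hx1 : 0 < x1 := by positivity
    have hx2 : 0 < x2 := by positivity
    have hlt : x1 < x2 := by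
      apply inv_strictAnti₀ (by positivity)
      exact pow_lt_pow_right₀ one_lt_two h
    have hanti := hφ.anti (mem_Ioi.mpr hx1) (mem_Ioi.mpr hx2) hlt
    -- hanti : x2 ^ (-(φ x2)) < x1 ^ (-(φ x1))
    have hlog := Real.log_lt_log (Real.rpow_pos_of_pos hx2 _) hanti
    rw [Real.log_rpow hx2, Real.log_rpow hx1] at hlog
    have hlx1 : Real.log x1 = -((n:ℝ) * Real.log 2) := by
      rw [hx1d, Real.log_inv, Real.log_pow]
    have hlx2 : Real.log x2 = -((m:ℝ) * Real.log 2) := by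
      rw [hx2d, Real.log_inv, Real.log_pow]
    rw [hlx1, hlx2] at hlog
    have hl2 : 0 < Real.log 2 := Real.log_pos one_lt_two
    nlinarith [hlog]


/-- The measure-scaling estimate in the inductive Cantor-set construction (Part 4 of the
induction): a cube `U` of generation `g` with mass `μ(U) ≤ |U|^{d/δ - 3dφ(|U|)}` splits
its mass equally among `(κ/2^{d+1})·2^{d(j-g)}` children of generations
`gV ∈ [j, δ(j+1)+4]`; if `j ≥ 2g` is chosen sufficiently large, each child `V` receives
mass `μ(V) = μ(U)/#children ≤ |V|^{d/δ - 3dφ(|V|)}`. -/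
theorem stmt19 (d : ℕ) (hd : 1 ≤ d) (δ κ : ℝ) (hδ : 1 < δ)
    (hκ0 : 0 < κ) (hκ1 : κ < 1) (φ : ℝ → ℝ) (hφ : MemPhi φ)
    (g : ℕ) (mU : ℝ) (hmU0 : 0 ≤ mU)
    (hmU : mU ≤ (((2:ℝ) ^ g)⁻¹) ^ ((d : ℝ) / δ - 3 * d * φ (((2:ℝ) ^ g)⁻¹))) :
    ∃ J₀ : ℕ, ∀ j : ℕ, J₀ ≤ j → 2 * g ≤ j →
      ∀ gV : ℕ, j ≤ gV → (gV : ℝ) ≤ δ * ((j : ℝ) + 1) + 4 →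
        mU / (κ / 2 ^ (d + 1) * 2 ^ (d * (j - g)))
          ≤ (((2:ℝ) ^ gV)⁻¹) ^ ((d : ℝ) / δ - 3 * d * φ (((2:ℝ) ^ gV)⁻¹)) := by
  have two_pos : (0:ℝ) < 2 := two_pos
  have hD : (0:ℝ) < d := by exact_mod_cast hd
  set D : ℝ := (d : ℝ) with hDdef
  set C : ℝ := 3*D*(g:ℝ)*φ (((2:ℝ)^g)⁻¹) + D*(g:ℝ) - Real.logb 2 κ + 6*D + 1 with hCdef
  -- sequence 2^{-n} tends to 0 within Ioi 0
  have hs0 : Tendsto (fun n : ℕ => ((2:ℝ)^n)⁻¹) atTop (nhds 0) := by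
    simpa [inv_pow] using
      tendsto_pow_atTop_nhds_zero_of_lt_one (by norm_num : (0:ℝ) ≤ 2⁻¹) (by norm_num : (2:ℝ)⁻¹ < 1)
  have hs : Tendsto (fun n : ℕ => ((2:ℝ)^n)⁻¹) atTop (nhdsWithin 0 (Ioi 0)) := by
    apply tendsto_nhdsWithin_of_tendsto_nhds_of_eventually_within _ hs0
    exact Filter.Eventually.of_forall fun n => mem_Ioi.mpr (by positivity)
  have h1 : Tendsto (fun n : ℕ => (((2:ℝ)^n)⁻¹) ^ (-(φ (((2:ℝ)^n)⁻¹)))) atTop atTop :=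
    hφ.tendsto_top.comp hs
  have h2 : Tendsto (fun n : ℕ => ((n:ℝ) * φ (((2:ℝ)^n)⁻¹)) * Real.log 2) atTop atTop := by
    have h2a : Tendsto (fun n : ℕ => Real.log ((((2:ℝ)^n)⁻¹) ^ (-(φ (((2:ℝ)^n)⁻¹))))) atTop atTop :=
      Real.tendsto_log_atTop.comp h1
    refine h2a.congr fun n => ?_
    rw [Real.log_rpow (by positivity), Real.log_inv, Real.log_pow]
    push_cast; ring
  have hl2 : 0 < Real.log 2 := Real.log_pos one_lt_two
  have h3 : Tendsto (fun n : ℕ => (n:ℝ) * φ (((2:ℝ)^n)⁻¹)) atTop atTop := by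
    have := h2.atTop_div_const hl2
    refine this.congr fun n => ?_
    field_simp
  have h4 : Tendsto (fun n : ℕ => 3 * D * ((n:ℝ) * φ (((2:ℝ)^n)⁻¹))) atTop atTop :=
    h3.const_mul_atTop (by positivity)
  obtain ⟨J₁, hJ₁⟩ := Filter.eventually_atTop.mp (h4.eventually_ge_atTop C)
  refine ⟨max J₁ 1, fun j hj hgj gV hjgV hgVδ => ?_⟩
  have hJ : J₁ ≤ j := le_trans (le_max_left _ _) hj
  have hgj' : g ≤ j := by omega
  have hδ0 : (0:ℝ) < δ := lt_trans one_pos hδ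
  -- rpow conversions
  have key : ∀ n : ℕ, ((2:ℝ)^n)⁻¹ = (2:ℝ) ^ (-(n:ℝ)) := fun n => by
    rw [← Real.rpow_natCast 2 n, ← Real.rpow_neg (by norm_num)]
  set eU : ℝ := D / δ - 3 * D * φ (((2:ℝ)^g)⁻¹) with heU
  set eV : ℝ := D / δ - 3 * D * φ (((2:ℝ)^gV)⁻¹) with heV
  have hUpow : (((2:ℝ)^g)⁻¹) ^ eU = (2:ℝ) ^ (-(g:ℝ) * eU) := by
    rw [key g, ← Real.rpow_mul (by norm_num)]
  have hVpow : (((2:ℝ)^gV)⁻¹) ^ eV = (2:ℝ) ^ (-(gV:ℝ) * eV) := by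
    rw [key gV, ← Real.rpow_mul (by norm_num)]
  set E : ℝ := Real.logb 2 κ - (D + 1) + D * ((j:ℝ) - (g:ℝ)) with hEdef
  have hden : κ / 2^(d+1) * 2^(d*(j-g)) = (2:ℝ) ^ E := by
    rw [hEdef, Real.rpow_add two_pos, Real.rpow_sub two_pos]
    congr 1
    · congr 1
      · exact (Real.rpow_logb two_pos (by norm_num) hκ0).symm
      · rw [← Real.rpow_natCast 2 (d+1)]; push_cast; ring_nf; rw [hDdef]
    · rw [← Real.rpow_natCast 2 (d*(j-g))]
      congr 1
      push_cast [Nat.cast_sub hgj']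
      ring
  have hden_pos : (0:ℝ) < κ / 2^(d+1) * 2^(d*(j-g)) := by positivity
  -- exponent inequality
  have hexp : -(g:ℝ) * eU - E ≤ -(gV:ℝ) * eV := by
    have hφU0 : 0 ≤ φ (((2:ℝ)^g)⁻¹) := hφ.nonneg _ (le_of_lt (by positivity : (0:ℝ) < ((2:ℝ)^g)⁻¹))
    have hφV0 : 0 ≤ φ (((2:ℝ)^gV)⁻¹) := hφ.nonneg _ (le_of_lt (by positivity : (0:ℝ) < ((2:ℝ)^gV)⁻¹))
    have hA : (gV:ℝ) * (D/δ) ≤ D * ((j:ℝ) + 5) := by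
      have h' : (gV:ℝ) ≤ δ * ((j:ℝ)+5) := by nlinarith
      have h'' : (gV:ℝ)/δ ≤ (j:ℝ)+5 := (div_le_iff₀ hδ0).mpr (by linarith)
      calc (gV:ℝ) * (D/δ) = D * ((gV:ℝ)/δ) := by ring
        _ ≤ D * ((j:ℝ)+5) := by
            exact mul_le_mul_of_nonneg_left h'' (le_of_lt hD)
    have hB : C ≤ 3 * D * ((j:ℝ) * φ (((2:ℝ)^j)⁻¹)) := hJ₁ j hJ
    have hmono : (j:ℝ) * φ (((2:ℝ)^j)⁻¹) ≤ (gV:ℝ) * φ (((2:ℝ)^gV)⁻¹) :=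
      aux_mono hφ hjgV
    have hmono' : 3 * D * ((j:ℝ) * φ (((2:ℝ)^j)⁻¹)) ≤ 3 * D * ((gV:ℝ) * φ (((2:ℝ)^gV)⁻¹)) :=
      mul_le_mul_of_nonneg_left hmono (by positivity)
    have hgD : 0 ≤ (g:ℝ) * (D/δ) := by positivity
    rw [hCdef] at hB
    rw [heU, heV, hEdef]
    linarith [hB, hmono', hA, hgD]
  calc mU / (κ / 2^(d+1) * 2^(d*(j-g)))
      ≤ (2:ℝ) ^ (-(g:ℝ) * eU) / (κ / 2^(d+1) * 2^(d*(j-g))) := by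
        gcongr
        rw [← hUpow]; exact hmU
    _ = (2:ℝ) ^ (-(g:ℝ) * eU) / (2:ℝ) ^ E := by rw [hden]
    _ = (2:ℝ) ^ (-(g:ℝ) * eU - E) := (Real.rpow_sub two_pos _ _).symm
    _ ≤ (2:ℝ) ^ (-(gV:ℝ) * eV) := (Real.rpow_le_rpow_left_iff one_lt_two).mpr hexp
    _ = (((2:ℝ)^gV)⁻¹) ^ eV := hVpow.symm
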